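/- Reversal invariance of knot BiEntropy: for s : Fin n → Bool, the reversed string s̄(i) = s(n-1-i) satisfies KTBiEn(s̄) = KTBiEn(s). -/

import Mathlib

noncomputable def H (p : ℝ) : ℝ := -p * Real.logb 2 p - (1 - p) * Real.logb 2 (1 - p)

def kd {n : ℕ} [NeZero n] (s : Fin n → Bool) : Fin n → Bool := fun i => xor (s i) (s (i + 1))

noncomputable def ones {n : ℕ} (s : Fin n → Bool) : ℕ :=
  (Finset.univ.filter (fun i => s i = true)).card

noncomputable def KTBiEn {n : ℕ} [NeZero n] (s : Fin n → Bool) : ℝ :=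
  (∑ k ∈ Finset.range (n - 1), H ((ones (kd^[k] s) : ℝ) / n) * Real.logb 2 (k + 2)) /
    (∑ k ∈ Finset.range (n - 1), Real.logb 2 (k + 2))

open Fin.CommRing in
lemma kd_iter_rev {n : ℕ} [NeZero n] (s : Fin n → Bool) (k : ℕ) :
    kd^[k] (fun i => s i.rev) = fun i => (kd^[k] s) ((i + (k : Fin n)).rev) := by
  induction k with
  | zero => simp
  | succ k ih =>
    funext i
    rw [Function.iterate_succ_apply', Function.iterate_succ_apply', ih]
    show xor _ _ = xor _ _
    have hc : ((k + 1 : ℕ) : Fin n) = (k : Fin n) + 1 := by push_cast; ring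
    have h1 : (i + (k : Fin n)).rev = (i + ((k : Fin n) + 1)).rev + 1 := by
      rw [Fin.rev_add, Fin.rev_add]; ring
    have h2 : (i + 1 + (k : Fin n)).rev = (i + ((k : Fin n) + 1)).rev := by
      rw [add_assoc, add_comm 1 (k : Fin n)]
    rw [hc]; simp only [h1, h2]
    exact Bool.xor_comm _ _

lemma ones_comp {n : ℕ} (s : Fin n → Bool) (e : Equiv.Perm (Fin n)) :
    ones (fun i => s (e i)) = ones s := by
  unfold ones
  apply Finset.card_nbij e
  · intro a ha; simp_all
  · intro a _ b _ h; exact e.injective h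
  · intro b hb
    exact ⟨e.symm b, by simp_all⟩

theorem ktBiEn_rev (n : ℕ) [NeZero n] (s : Fin n → Bool) :
    KTBiEn (fun i => s i.rev) = KTBiEn s := by
  unfold KTBiEn
  congr 1
  apply Finset.sum_congr rfl
  intro k _
  open Fin.CommRing in have h := ones_comp (kd^[k] s) ((Equiv.addRight (k : Fin n)).trans Fin.revPerm)
  simp only [Equiv.trans_apply, Equiv.coe_addRight, Fin.revPerm_apply] at h
  rw [kd_iter_rev, h]
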